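/- Define X_m to be the real line ℝ (pointed at 0, with the Lebesgue measure) equipped with the continuous curve η_m : ℝ → ℝ, η_m(t) = min(m, 1/|1−t|). Then for every r > 0 and all m, m' large enough (depending on r), the restrictions of η_m and η_{m'} to the ball B_r(0) agree after stopping at the exit time of the ball, so that (X_m) is a Cauchy sequence with respect to the local Gromov-Hausdorff-uniform distance; however, the sequence (η_m) does not converge uniformly on compact time intervals to any continuous curve ℝ → ℝ defined on all of ℝ. -/

import Mathlib

open Metric Set Filter

/-- The curve `η_m(t) = min(m, 1/|1−t|)` (with value `m` at `t = 1`). -/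
noncomputable def etaCurve (m : ℕ) (t : ℝ) : ℝ :=
  if t = 1 then (m : ℝ) else min (m : ℝ) (1 / |1 - t|)

/-- The exit time of `η_m` from the closed ball of radius `r` around `0`. -/
noncomputable def exitTime (m : ℕ) (r : ℝ) : ℝ :=
  sInf {t : ℝ | etaCurve m t ∉ Metric.closedBall (0 : ℝ) r}

lemma etaCurve_eq_const (m : ℕ) {t : ℝ} (h : |t - 1| < 1 / (m + 1)) :
    etaCurve m t = m := by
  unfold etaCurve
  split
  · rfl
  · rename_i ht
    have h0 : 0 < |1 - t| := by
      rw [abs_sub_comm]; exact abs_pos.mpr (sub_ne_zero.mpr ht)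
    rw [abs_sub_comm] at h
    have h1 : (m : ℝ) + 1 < 1 / |1 - t| := by
      rw [lt_div_iff₀ h0]
      calc ((m : ℝ) + 1) * |1 - t| < ((m : ℝ) + 1) * (1 / ((m : ℝ) + 1)) := by
            apply mul_lt_mul_of_pos_left h (by positivity)
        _ = 1 := by field_simp
    exact min_eq_left (by linarith)

lemma etaCurve_continuous (m : ℕ) : Continuous (etaCurve m) := by
  rw [continuous_iff_continuousAt]
  intro t
  by_cases ht : t = 1
  · subst ht
    have heq : etaCurve m =ᶠ[nhds 1] fun _ => (m : ℝ) := by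
      filter_upwards [Metric.ball_mem_nhds (1 : ℝ)
        (show (0:ℝ) < 1 / (m + 1) by positivity)] with s hs
      exact etaCurve_eq_const m (by simpa [Real.dist_eq] using hs)
    exact ContinuousAt.congr continuousAt_const heq.symm
  · have hopen : {s : ℝ | s ≠ 1} ∈ nhds t :=
      (isOpen_compl_singleton).mem_nhds ht
    have heq : etaCurve m =ᶠ[nhds t] fun s => min (m : ℝ) (1 / |1 - s|) := by
      filter_upwards [hopen] with s hs
      simp [etaCurve, hs]
    have hd : ContinuousAt (fun s : ℝ => 1 / |1 - s|) t :=
      ContinuousAt.div continuousAt_const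
        (((continuous_const.sub continuous_id).abs).continuousAt)
        (abs_ne_zero.mpr (sub_ne_zero.mpr (Ne.symm ht)))
    have hcont : ContinuousAt (fun s : ℝ => min (m : ℝ) (1 / |1 - s|)) t :=
      ContinuousAt.inf (f := fun _ : ℝ => (m:ℝ)) (g := fun s : ℝ => 1 / |1 - s|) continuousAt_const hd
    exact hcont.congr heq.symm

lemma etaCurve_nonneg (m : ℕ) (t : ℝ) : 0 ≤ etaCurve m t := by
  unfold etaCurve
  split
  · positivity
  · exact le_min (by positivity) (by positivity)

lemma exitSet_eq {m : ℕ} {r : ℝ} (hr : 0 < r) (hm : r < m) :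
    {t : ℝ | etaCurve m t ∉ Metric.closedBall (0 : ℝ) r}
      = Ioo (1 - 1/r) (1 + 1/r) := by
  ext t
  simp only [mem_setOf_eq, Metric.mem_closedBall, Real.dist_eq, sub_zero, not_le,
    abs_of_nonneg (etaCurve_nonneg m t), mem_Ioo]
  constructor
  · intro h
    by_cases ht : t = 1
    · subst ht; constructor <;> [linarith [one_div_pos.mpr hr]; linarith [one_div_pos.mpr hr]]
    · have h0 : 0 < |1 - t| := by
        rw [abs_sub_comm]; exact abs_pos.mpr (sub_ne_zero.mpr ht)
      have h1 : r < 1 / |1 - t| := lt_of_lt_of_le (by simpa [etaCurve, ht] using h) (min_le_right _ _)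
      have h2 : |1 - t| < 1 / r := by
        rw [lt_div_iff₀ hr]
        rw [lt_div_iff₀ h0] at h1
        linarith [mul_comm r |1 - t|]
      rw [abs_lt] at h2
      constructor <;> linarith
  · rintro ⟨h1, h2⟩
    by_cases ht : t = 1
    · subst ht; simpa [etaCurve] using hm
    · have h0 : 0 < |1 - t| := by
        rw [abs_sub_comm]; exact abs_pos.mpr (sub_ne_zero.mpr ht)
      have h3 : |1 - t| < 1 / r := by rw [abs_lt]; constructor <;> linarith
      have h4 : r < 1 / |1 - t| := by
        rw [lt_div_iff₀ h0]
        rw [lt_div_iff₀ hr] at h3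
        linarith [mul_comm |1 - t| r]
      have : etaCurve m t = min (m : ℝ) (1 / |1 - t|) := by simp [etaCurve, ht]
      rw [this]
      exact lt_min hm h4

lemma exitTime_eq {m : ℕ} {r : ℝ} (hr : 0 < r) (hm : r < m) :
    exitTime m r = 1 - 1/r := by
  rw [exitTime, exitSet_eq hr hm, csInf_Ioo]
  have : 0 < 1 / r := one_div_pos.mpr hr
  linarith

theorem stmt_19 :
    (∀ m : ℕ, Continuous (etaCurve m)) ∧
    (∀ r : ℝ, 0 < r → ∃ M : ℕ, ∀ m ≥ M, ∀ m' ≥ M, ∀ t : ℝ,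
      etaCurve m (min t (exitTime m r)) = etaCurve m' (min t (exitTime m' r))) ∧
    ¬ ∃ η : ℝ → ℝ, Continuous η ∧
      TendstoLocallyUniformly (fun m : ℕ => etaCurve m) η atTop := by
  refine ⟨etaCurve_continuous, ?_, ?_⟩
  · intro r hr
    refine ⟨⌈r⌉₊ + 1, ?_⟩
    intro m hm m' hm' t
    have hrm : r < (m : ℝ) := lt_of_le_of_lt (Nat.le_ceil r) (by exact_mod_cast hm)
    have hrm' : r < (m' : ℝ) := lt_of_le_of_lt (Nat.le_ceil r) (by exact_mod_cast hm')
    rw [exitTime_eq hr hrm, exitTime_eq hr hrm']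
    set s := min t (1 - 1/r) with hs
    have hinv : 0 < 1 / r := one_div_pos.mpr hr
    have hsle : s ≤ 1 - 1/r := min_le_right _ _
    have hs1 : s ≠ 1 := by intro h; rw [h] at hsle; linarith
    have habs : 1 / r ≤ |1 - s| := by
      rw [abs_of_nonneg (by linarith)]; linarith
    have hsmall : 1 / |1 - s| ≤ r := by
      rw [div_le_iff₀ (lt_of_lt_of_le hinv habs)]
      calc (1 : ℝ) = r * (1/r) := by field_simp
        _ ≤ r * |1 - s| := by apply mul_le_mul_of_nonneg_left habs (le_of_lt hr)
    have e1 : etaCurve m s = 1 / |1 - s| := by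
      simp only [etaCurve, hs1, if_false]
      exact min_eq_right (by linarith)
    have e2 : etaCurve m' s = 1 / |1 - s| := by
      simp only [etaCurve, hs1, if_false]
      exact min_eq_right (by linarith)
    rw [e1, e2]
  · rintro ⟨η, hc, h⟩
    have hptw : Tendsto (fun m : ℕ => etaCurve m 1) atTop (nhds (η 1)) :=
      (tendstoLocallyUniformlyOn_univ.mpr h).tendsto_at (mem_univ 1)
    have : (fun m : ℕ => etaCurve m 1) = fun m : ℕ => (m : ℝ) := by
      funext m; simp [etaCurve]
    rw [this] at hptw
    exact not_tendsto_nhds_of_tendsto_atTop tendsto_natCast_atTop_atTop _ hptw
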